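/- Let N > 0, β ∈ (0,1), and let Kₘ, β', Ψ, p, w, z be real numbers. Set γ = (β' − 2·Kₘ·β)/(1 − β). If p + γ·Ψ − N·γ²/(8β) ≥ 0, then 2β·( Kₘ·w + (z − w)²/N ) − β'·w + p ≥ γ·(β·w − z − Ψ). -/

import Mathlib

/-- Pointwise algebraic core of the lemma `Δ^V G + 2dG(∇f) − ∂ₜG ≥ γ G`,
with `γ = (β' − 2K⁻β)/(1 − β)` and condition (B₅). -/
theorem G_subsolution_core (N β Kₘ β' Ψ p w z : ℝ) (hN : 0 < N)
    (hβ : β ∈ Set.Ioo (0 : ℝ) 1)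
    (hB5 : p + ((β' - 2 * Kₘ * β) / (1 - β)) * Ψ -
      N * ((β' - 2 * Kₘ * β) / (1 - β)) ^ 2 / (8 * β) ≥ 0) :
    2 * β * (Kₘ * w + (z - w) ^ 2 / N) - β' * w + p ≥
      ((β' - 2 * Kₘ * β) / (1 - β)) * (β * w - z - Ψ) := by
  obtain ⟨hβ0, hβ1⟩ := hβ
  have h1β : (0:ℝ) < 1 - β := by linarith
  set γ : ℝ := (β' - 2 * Kₘ * β) / (1 - β) with hγ
  have hβ' : β' = γ * (1 - β) + 2 * Kₘ * β := by
    rw [hγ, div_mul_cancel₀ _ (ne_of_gt h1β)]; ring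
  have key : 2 * β * (z - w) ^ 2 / N + γ * (z - w) + N * γ ^ 2 / (8 * β) ≥ 0 := by
    have h : 2 * β * (z - w) ^ 2 / N + γ * (z - w) + N * γ ^ 2 / (8 * β)
        = (2 * β / N) * ((z - w) + N * γ / (4 * β)) ^ 2 := by
      field_simp; ring
    rw [h]
    positivity
  have hB5' : p + γ * Ψ - N * γ ^ 2 / (8 * β) ≥ 0 := hB5
  have expand : 2 * β * (Kₘ * w + (z - w) ^ 2 / N) - β' * w + p - γ * (β * w - z - Ψ)
      = (2 * β * (z - w) ^ 2 / N + γ * (z - w) + N * γ ^ 2 / (8 * β))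
        + (p + γ * Ψ - N * γ ^ 2 / (8 * β)) := by
    rw [hβ']; ring
  linarith [key, hB5', expand.ge, expand.le]
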